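/- The Gaussian mechanism satisfies Rényi differential privacy: adding Gaussian noise N(0, σ²) to a real-valued function f with sensitivity Δ = max over adjacent d, d' of |f(d) − f(d')| yields a mechanism satisfying (λ, λΔ²/(2σ²))-RDP for every λ > 1. -/

import Mathlib

/-- Density of the Gaussian distribution N(μ, σ²). -/
noncomputable def gaussDensity (μ σ z : ℝ) : ℝ :=
  (1 / (σ * Real.sqrt (2 * Real.pi))) * Real.exp (-(z - μ) ^ 2 / (2 * σ ^ 2))

lemma gauss_int (μ σ : ℝ) (hσ : 0 < σ) : (∫ z : ℝ, gaussDensity μ σ z) = 1 := by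
  have hb : (0:ℝ) < 1 / (2 * σ ^ 2) := by positivity
  have h1 : ∀ z : ℝ, gaussDensity μ σ z =
      (1 / (σ * Real.sqrt (2 * Real.pi))) * Real.exp (-(1 / (2 * σ ^ 2)) * (z - μ) ^ 2) := by
    intro z; rw [gaussDensity]; ring_nf
  simp only [h1]
  rw [MeasureTheory.integral_const_mul]
  rw [show (∫ z : ℝ, Real.exp (-(1 / (2 * σ ^ 2)) * (z - μ) ^ 2)) =
      ∫ z : ℝ, Real.exp (-(1 / (2 * σ ^ 2)) * z ^ 2) from
    MeasureTheory.integral_sub_right_eq_self (μ := MeasureTheory.volume)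
      (fun z => Real.exp (-(1 / (2 * σ ^ 2)) * z ^ 2)) μ |>.symm ▸ rfl]
  rw [integral_gaussian]
  have : Real.pi / (1 / (2 * σ ^ 2)) = σ ^ 2 * (2 * Real.pi) := by
    field_simp
  rw [this, Real.sqrt_mul (sq_nonneg σ) (2 * Real.pi), Real.sqrt_sq hσ.le]
  field_simp

lemma gauss_factor (μ μ' σ lam : ℝ) (hσ : 0 < σ) (z : ℝ) :
    gaussDensity μ σ z ^ lam * gaussDensity μ' σ z ^ (1 - lam) =
      Real.exp (lam * (lam - 1) * (μ - μ') ^ 2 / (2 * σ ^ 2)) *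
        gaussDensity (lam * μ + (1 - lam) * μ') σ z := by
  have hC : (0:ℝ) < 1 / (σ * Real.sqrt (2 * Real.pi)) := by positivity
  have hrep : ∀ m : ℝ, gaussDensity m σ z =
      Real.exp (Real.log (1 / (σ * Real.sqrt (2 * Real.pi))) + -(z - m) ^ 2 / (2 * σ ^ 2)) := by
    intro m
    rw [Real.exp_add, Real.exp_log hC, gaussDensity]
  have hre : ∀ a y : ℝ, (Real.exp a) ^ y = Real.exp (a * y) := by
    intro a y
    rw [Real.rpow_def_of_pos (Real.exp_pos a), Real.log_exp]
  rw [hrep μ, hrep μ', hrep (lam * μ + (1 - lam) * μ'), hre, hre, ← Real.exp_add, ← Real.exp_add]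
  congr 1
  have hσ2 : σ ^ 2 ≠ 0 := by positivity
  field_simp
  ring

/-- The Gaussian mechanism satisfies RDP: adding N(0, σ²) noise to a real-valued f with
sensitivity Δ yields a mechanism satisfying (λ, λΔ²/(2σ²))-RDP for every λ > 1. -/
theorem gaussian_mechanism_rdp {D : Type} (Adj : D → D → Prop) (f : D → ℝ) (Δ σ : ℝ)
    (hσ : 0 < σ) (lam : ℝ) (hlam : 1 < lam)
    (hsens : ∀ d d', Adj d d' → |f d - f d'| ≤ Δ) :
    ∀ d d', Adj d d' →
      (1 / (lam - 1)) * Real.log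
          (∫ z : ℝ, gaussDensity (f d) σ z ^ lam * gaussDensity (f d') σ z ^ (1 - lam)) ≤
        lam * Δ ^ 2 / (2 * σ ^ 2) := by
  intro d d' hadj
  have hkey : ∀ z : ℝ, gaussDensity (f d) σ z ^ lam * gaussDensity (f d') σ z ^ (1 - lam) =
      Real.exp (lam * (lam - 1) * (f d - f d') ^ 2 / (2 * σ ^ 2)) *
        gaussDensity (lam * f d + (1 - lam) * f d') σ z := fun z => gauss_factor _ _ _ _ hσ z
  simp only [hkey]
  rw [MeasureTheory.integral_const_mul, gauss_int _ _ hσ, mul_one, Real.log_exp]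
  have h1 : (1 / (lam - 1)) * (lam * (lam - 1) * (f d - f d') ^ 2 / (2 * σ ^ 2)) =
      lam * (f d - f d') ^ 2 / (2 * σ ^ 2) := by
    have : lam - 1 ≠ 0 := by linarith
    field_simp
  rw [h1]
  have habs := hsens d d' hadj
  have hsq : (f d - f d') ^ 2 ≤ Δ ^ 2 := by
    rw [← sq_abs]
    exact pow_le_pow_left₀ (abs_nonneg _) habs 2
  apply div_le_div_of_nonneg_right ?_ (by positivity)
  exact mul_le_mul_of_nonneg_left hsq (by linarith)
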